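/- Let F : ℝ → ℝ be continuous with F ≥ 0, F(M) = 0, and F bounded on [0,M]. Let k be a positive integer, α = tan(π/(2k)), S_ρ the sector of half-angle π/(2k) truncated to B_ρ, and w = min{M, (α x₁ - |x₂|)/√2} extended by 0 outside S. Then there exists C > 0 (depending on k, M, and sup_{[0,M]}F, but not on ρ) such that ∫_{S_{ρ}} (½|∇w|² + F(w)) ≤ Cρ + F(0)·|S_ρ| for all ρ > 1. -/

import Mathlib

open Real Set MeasureTheory

lemma aux_lip (a M : ℝ) : LipschitzWith ⟨|a|+1, by positivity⟩
    (fun y : ℝ×ℝ => max 0 (min M ((a * y.1 - |y.2|)/Real.sqrt 2))) := by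
  apply LipschitzWith.of_dist_le_mul
  intro x y
  have h2 : (1:ℝ) ≤ Real.sqrt 2 := by
    nlinarith [Real.sq_sqrt (by norm_num : (0:ℝ) ≤ 2), Real.sqrt_nonneg 2]
  have hd1 : |x.1 - y.1| ≤ dist x y := by
    rw [Prod.dist_eq, ← Real.dist_eq]; exact le_max_left _ _
  have hd2 : |x.2 - y.2| ≤ dist x y := by
    rw [Prod.dist_eq, ← Real.dist_eq]; exact le_max_right _ _
  have hD : (0:ℝ) ≤ dist x y := dist_nonneg
  rw [Real.dist_eq]
  have step1 : |max 0 (min M ((a * x.1 - |x.2|)/Real.sqrt 2)) -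
      max 0 (min M ((a * y.1 - |y.2|)/Real.sqrt 2))| ≤
      |(a * x.1 - |x.2|)/Real.sqrt 2 - (a * y.1 - |y.2|)/Real.sqrt 2| := by
    calc |max 0 (min M ((a * x.1 - |x.2|)/Real.sqrt 2)) -
        max 0 (min M ((a * y.1 - |y.2|)/Real.sqrt 2))|
        ≤ |min M ((a * x.1 - |x.2|)/Real.sqrt 2) - min M ((a * y.1 - |y.2|)/Real.sqrt 2)| := by
          rw [max_comm 0, max_comm 0]; exact abs_max_sub_max_le_abs _ _ _
      _ ≤ _ := by
          simpa using abs_min_sub_min_le_max M ((a * x.1 - |x.2|)/Real.sqrt 2)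
            M ((a * y.1 - |y.2|)/Real.sqrt 2)
  refine step1.trans ?_
  have step2 : |(a * x.1 - |x.2|)/Real.sqrt 2 - (a * y.1 - |y.2|)/Real.sqrt 2|
      ≤ |(a * x.1 - |x.2|) - (a * y.1 - |y.2|)| := by
    rw [div_sub_div_same, abs_div, abs_of_nonneg (Real.sqrt_nonneg 2)]
    exact div_le_self (abs_nonneg _) h2
  refine step2.trans ?_
  have step3 : |(a * x.1 - |x.2|) - (a * y.1 - |y.2|)| ≤ |a| * |x.1 - y.1| + |x.2 - y.2| := by
    have e : (a * x.1 - |x.2|) - (a * y.1 - |y.2|) = a * (x.1 - y.1) - (|x.2| - |y.2|) := by ring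
    rw [e]
    calc |a * (x.1 - y.1) - (|x.2| - |y.2|)| ≤ |a * (x.1 - y.1)| + abs (|x.2| - |y.2|) :=
          abs_sub _ _
      _ ≤ |a| * |x.1 - y.1| + |x.2 - y.2| := by
          rw [abs_mul]
          exact add_le_add le_rfl (abs_abs_sub_abs_le_abs_sub _ _)
  refine step3.trans ?_
  show |a| * |x.1 - y.1| + |x.2 - y.2| ≤ (|a| + 1) * dist x y
  nlinarith [abs_nonneg a, abs_nonneg (x.1-y.1), abs_nonneg (x.2-y.2)]


set_option maxHeartbeats 1000000 in
theorem stmt15 (k : ℕ) (hk : 1 ≤ k) (M : ℝ) (hM : 0 < M)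
    (F : ℝ → ℝ) (hFc : Continuous F) (hF0 : ∀ s, 0 ≤ F s) (hFM : F M = 0) :
    ∃ C : ℝ, 0 < C ∧ ∀ ρ > (1:ℝ),
      ∫ x in {x : ℝ × ℝ | x.1^2 + x.2^2 < ρ^2 ∧ Real.tan (π/(2*k)) * x.1 > |x.2|},
        ((1/2) * ‖fderiv ℝ (fun y : ℝ × ℝ =>
            if Real.tan (π/(2*k)) * y.1 > |y.2| then
              min M ((Real.tan (π/(2*k)) * y.1 - |y.2|) / Real.sqrt 2)
            else 0) x‖^2
          + F (if Real.tan (π/(2*k)) * x.1 > |x.2| then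
              min M ((Real.tan (π/(2*k)) * x.1 - |x.2|) / Real.sqrt 2)
            else 0))
      ≤ C * ρ + F 0 *
        (volume {x : ℝ × ℝ | x.1^2 + x.2^2 < ρ^2 ∧
          Real.tan (π/(2*k)) * x.1 > |x.2|}).toReal := by
  set a := Real.tan (π/(2*(k:ℝ))) with ha
  set f : ℝ × ℝ → ℝ := fun y => max 0 (min M ((a * y.1 - |y.2|)/Real.sqrt 2)) with hfdef
  have hfeq : ∀ y : ℝ × ℝ,
      (if a * y.1 > |y.2| then min M ((a * y.1 - |y.2|)/Real.sqrt 2) else 0) = f y := by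
    intro y
    by_cases h : a * y.1 > |y.2|
    · rw [if_pos h]
      have ht : 0 < (a * y.1 - |y.2|)/Real.sqrt 2 :=
        div_pos (by linarith) (by positivity)
      show M ⊓ ((a * y.1 - |y.2|)/Real.sqrt 2) = 0 ⊔ M ⊓ ((a * y.1 - |y.2|)/Real.sqrt 2)
      exact (max_eq_right (le_of_lt (lt_min hM ht))).symm
    · rw [if_neg h]
      push_neg at h
      have ht : (a * y.1 - |y.2|)/Real.sqrt 2 ≤ 0 :=
        div_nonpos_of_nonpos_of_nonneg (by linarith) (by positivity)
      show (0:ℝ) = 0 ⊔ M ⊓ ((a * y.1 - |y.2|)/Real.sqrt 2)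
      rw [min_eq_right (ht.trans hM.le), max_eq_left ht]
  obtain ⟨m, hm, hmax⟩ := (isCompact_Icc (a := (0:ℝ)) (b := M)).exists_isMaxOn
    ⟨0, le_refl 0, hM.le⟩ hFc.continuousOn
  have hB : ∀ y ∈ Icc (0:ℝ) M, F y ≤ F m := fun y hy => hmax hy
  set B := F m with hBdef
  have hB0 : F 0 ≤ B := hB 0 ⟨le_rfl, hM.le⟩
  have hBnn : 0 ≤ B := hF0 m
  have hLip : LipschitzWith ⟨|a|+1, by positivity⟩ f := aux_lip a M
  have hDb : ∀ x, ‖fderiv ℝ f x‖ ≤ |a| + 1 := fun x =>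
    norm_fderiv_le_of_lipschitz ℝ hLip
  have hplateau : ∀ x : ℝ × ℝ, Real.sqrt 2 * M < a * x.1 - |x.2| →
      fderiv ℝ f x = 0 ∧ f x = M := by
    intro x hgt
    have hopen : IsOpen {y : ℝ × ℝ | Real.sqrt 2 * M < a * y.1 - |y.2|} :=
      isOpen_lt continuous_const ((continuous_const.mul continuous_fst).sub continuous_snd.abs)
    have hconst : ∀ y ∈ {y : ℝ × ℝ | Real.sqrt 2 * M < a * y.1 - |y.2|}, f y = M := by
      intro y hy
      have h1 : M < (a * y.1 - |y.2|)/Real.sqrt 2 := by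
        rw [lt_div_iff₀ (by positivity : (0:ℝ) < Real.sqrt 2)]
        have := hy
        simp only [mem_setOf_eq] at this
        nlinarith
      show (0:ℝ) ⊔ M ⊓ ((a * y.1 - |y.2|)/Real.sqrt 2) = M
      rw [min_eq_left h1.le, max_eq_right hM.le]
    have hev : f =ᶠ[nhds x] fun _ => M :=
      Filter.eventuallyEq_of_mem (hopen.mem_nhds hgt) hconst
    refine ⟨?_, hconst x hgt⟩
    rw [hev.fderiv_eq]
    exact fderiv_const_apply M
  set c := (1/2)*(|a|+1)^2 + B with hc
  have hcnn : 0 ≤ c := by positivity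
  refine ⟨c * (4*Real.sqrt 2*M) + 1, by positivity, ?_⟩
  intro ρ hρ
  have hρ0 : (0:ℝ) < ρ := by linarith
  set Sρ := {x : ℝ × ℝ | x.1^2 + x.2^2 < ρ^2 ∧ a * x.1 > |x.2|} with hSdef
  set strip := {x : ℝ × ℝ | a * x.1 - |x.2| < Real.sqrt 2 * M} with hstripdef
  have hSm : MeasurableSet Sρ := by
    have : Sρ = {x : ℝ × ℝ | x.1^2 + x.2^2 < ρ^2} ∩ {x : ℝ × ℝ | |x.2| < a * x.1} := rfl
    rw [this]
    exact (measurableSet_lt (by fun_prop) measurable_const).inter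
      (measurableSet_lt (by fun_prop) (by fun_prop))
  have hstripm : MeasurableSet strip :=
    measurableSet_lt (by fun_prop) measurable_const
  have hIoo : ∀ x : ℝ × ℝ, x ∈ Sρ → x.1 ∈ Ioo (-ρ) ρ := by
    rintro ⟨x1, x2⟩ ⟨h1, h2⟩
    simp only at h1 h2 ⊢
    constructor <;> nlinarith [sq_nonneg x2, sq_nonneg (x1 - ρ), sq_nonneg (x1 + ρ)]
  have hfin : volume Sρ < ⊤ := by
    have hsub : Sρ ⊆ Ioo (-ρ) ρ ×ˢ Ioo (-ρ) ρ := by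
      rintro ⟨x1, x2⟩ hx
      obtain ⟨h1, h2⟩ := hx
      refine ⟨hIoo _ ⟨h1, h2⟩, ?_⟩
      simp only at h1 h2 ⊢
      constructor <;> nlinarith [abs_nonneg x2, sq_abs x2, abs_lt.mp (show |x2| < ρ from by nlinarith [sq_nonneg x1, sq_abs x2, abs_nonneg x2])]
    refine lt_of_le_of_lt (measure_mono hsub) ?_
    rw [Measure.volume_eq_prod, Measure.prod_prod, Real.volume_Ioo]
    exact ENNReal.mul_lt_top ENNReal.ofReal_lt_top ENNReal.ofReal_lt_top
  haveI : IsFiniteMeasure (volume.restrict Sρ) :=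
    ⟨by rwa [Measure.restrict_apply_univ]⟩
  -- the boundary of the plateau is a null set
  have hN : volume {x : ℝ × ℝ | a * x.1 - |x.2| = Real.sqrt 2 * M} = 0 := by
    have hNm : MeasurableSet {x : ℝ × ℝ | a * x.1 - |x.2| = Real.sqrt 2 * M} :=
      measurableSet_eq_fun ((measurable_const.mul measurable_fst).sub measurable_snd.abs) measurable_const
    rw [Measure.volume_eq_prod, Measure.prod_apply hNm]
    have hz : ∀ x1 : ℝ,
        volume (Prod.mk x1 ⁻¹' {x : ℝ × ℝ | a * x.1 - |x.2| = Real.sqrt 2 * M}) = 0 := by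
      intro x1
      have hsub : Prod.mk x1 ⁻¹' {x : ℝ × ℝ | a * x.1 - |x.2| = Real.sqrt 2 * M} ⊆
          ({a * x1 - Real.sqrt 2 * M, -(a * x1 - Real.sqrt 2 * M)} : Set ℝ) := by
        intro y hy
        simp only [mem_preimage, mem_setOf_eq] at hy
        have h1 : |y| = a * x1 - Real.sqrt 2 * M := by linarith
        rcases (abs_eq (h1 ▸ abs_nonneg y)).mp h1 with h | h <;> simp [h]
      exact measure_mono_null hsub (Set.Finite.measure_zero (by simp) _)
    simp only [hz, lintegral_zero]
  -- the transition strip has small volume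
  have hvol : (volume (strip ∩ Sρ)).toReal ≤ 4 * Real.sqrt 2 * M * ρ := by
    set T := {x : ℝ × ℝ | x.1 ∈ Ioo (-ρ) ρ ∧
      a * x.1 - Real.sqrt 2 * M < |x.2| ∧ |x.2| < a * x.1} with hTdef
    have hTm : MeasurableSet T := by
      have : T = ({x : ℝ × ℝ | x.1 ∈ Ioo (-ρ) ρ} ∩ {x : ℝ × ℝ | a * x.1 - Real.sqrt 2 * M < |x.2|})
          ∩ {x : ℝ × ℝ | |x.2| < a * x.1} := by
        ext x; simp [hTdef]; tauto
      rw [this]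
      exact ((measurable_fst (measurableSet_Ioo)).inter
        (measurableSet_lt (by fun_prop) (by fun_prop))).inter
        (measurableSet_lt (by fun_prop) (by fun_prop))
    have hsubT : strip ∩ Sρ ⊆ T := by
      rintro x ⟨hs, hS⟩
      obtain ⟨h1, h2⟩ := hS
      refine ⟨hIoo _ ⟨h1, h2⟩, ?_, h2⟩
      have hs' : a * x.1 - |x.2| < Real.sqrt 2 * M := hs
      linarith
    have hTvol : volume T ≤ ENNReal.ofReal (2 * (Real.sqrt 2 * M)) * ENNReal.ofReal (2 * ρ) := by
      rw [Measure.volume_eq_prod, Measure.prod_apply hTm]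
      have hslice : ∀ x1 : ℝ, volume (Prod.mk x1 ⁻¹' T) ≤
          (Ioo (-ρ) ρ).indicator (fun _ => ENNReal.ofReal (2 * (Real.sqrt 2 * M))) x1 := by
        intro x1
        by_cases hx1 : x1 ∈ Ioo (-ρ) ρ
        · rw [indicator_of_mem hx1]
          have hsub2 : Prod.mk x1 ⁻¹' T ⊆
              Ioo (a * x1 - Real.sqrt 2 * M) (a * x1) ∪
              Ioo (-(a * x1)) (-(a * x1 - Real.sqrt 2 * M)) := by
            intro y hy
            simp only [mem_preimage, hTdef, mem_setOf_eq] at hy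
            obtain ⟨-, h1, h2⟩ := hy
            rcases le_or_gt 0 y with h | h
            · left; rw [abs_of_nonneg h] at h1 h2; exact ⟨h1, h2⟩
            · right; rw [abs_of_neg h] at h1 h2
              exact ⟨by linarith, by linarith⟩
          refine (measure_mono hsub2).trans ((measure_union_le _ _).trans ?_)
          rw [Real.volume_Ioo, Real.volume_Ioo]
          have e1 : a * x1 - (a * x1 - Real.sqrt 2 * M) = Real.sqrt 2 * M := by ring
          have e2 : -(a * x1 - Real.sqrt 2 * M) - -(a * x1) = Real.sqrt 2 * M := by ring
          rw [e1, e2, ← ENNReal.ofReal_add (by positivity) (by positivity)]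
          exact ENNReal.ofReal_le_ofReal (by linarith)
        · rw [indicator_of_notMem hx1]
          have : Prod.mk x1 ⁻¹' T = ∅ := by
            ext y
            simp only [mem_preimage, hTdef, mem_setOf_eq, mem_empty_iff_false, iff_false]
            rintro ⟨h, -⟩
            exact hx1 h
          simp [this]
      refine (lintegral_mono hslice).trans ?_
      rw [lintegral_indicator measurableSet_Ioo, setLIntegral_const, Real.volume_Ioo]
      apply le_of_eq
      congr 1
      ring
    have h1 : volume (strip ∩ Sρ) ≤ ENNReal.ofReal (4 * Real.sqrt 2 * M * ρ) := by
      refine (measure_mono hsubT).trans (hTvol.trans ?_)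
      rw [← ENNReal.ofReal_mul (by positivity)]
      exact ENNReal.ofReal_le_ofReal (by nlinarith [Real.sqrt_nonneg 2])
    exact ENNReal.toReal_le_of_le_ofReal (by positivity) h1
  simp only [hfeq]
  set g : ℝ × ℝ → ℝ := fun x => strip.indicator (fun _ => c) x + F 0 with hgdef
  have hgi : Integrable g (volume.restrict Sρ) :=
    ((integrable_const c).indicator hstripm).add (integrable_const (F 0))
  have hnn : 0 ≤ᵐ[volume.restrict Sρ] fun x => (1/2) * ‖fderiv ℝ f x‖^2 + F (f x) :=
    Filter.Eventually.of_forall fun x => add_nonneg (by positivity) (hF0 _)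
  have hle : (fun x => (1/2) * ‖fderiv ℝ f x‖^2 + F (f x)) ≤ᵐ[volume.restrict Sρ] g := by
    filter_upwards [ae_restrict_of_ae (measure_eq_zero_iff_ae_notMem.mp hN)] with x hxN
    by_cases hst : x ∈ strip
    · have h1 : ‖fderiv ℝ f x‖ ≤ |a| + 1 := hDb x
      have h2 : F (f x) ≤ B := hB _ ⟨le_max_left _ _, max_le hM.le (min_le_left _ _)⟩
      have hgx : g x = c + F 0 := by rw [hgdef]; simp [indicator_of_mem hst]
      rw [hgx, hc]
      have h3 : (1/2) * ‖fderiv ℝ f x‖^2 ≤ (1/2)*(|a|+1)^2 := by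
        nlinarith [norm_nonneg (fderiv ℝ f x)]
      have h4 : F 0 ≥ 0 := hF0 0
      linarith
    · have hge : Real.sqrt 2 * M ≤ a * x.1 - |x.2| := not_lt.mp hst
      have hgt : Real.sqrt 2 * M < a * x.1 - |x.2| :=
        lt_of_le_of_ne hge (fun h => hxN h.symm)
      obtain ⟨hd0, hfM⟩ := hplateau x hgt
      have hgx : g x = F 0 := by rw [hgdef]; simp [indicator_of_notMem hst]
      rw [hgx, hd0, hfM, hFM]
      simp [hF0 0]
  refine le_trans (integral_mono_of_nonneg hnn hgi hle) ?_
  have hint : ∫ x in Sρ, g x =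
      c * (volume (strip ∩ Sρ)).toReal + F 0 * (volume Sρ).toReal := by
    rw [hgdef, integral_add ((integrable_const c).indicator hstripm) (integrable_const (F 0)),
      integral_indicator hstripm, Measure.restrict_restrict hstripm]
    simp [integral_const, Measure.restrict_apply_univ, smul_eq_mul, mul_comm, measureReal_def]
  rw [hint]
  have h4 : c * (volume (strip ∩ Sρ)).toReal ≤ c * (4 * Real.sqrt 2 * M * ρ) :=
    mul_le_mul_of_nonneg_left hvol hcnn
  have h5 : c * (4 * Real.sqrt 2 * M * ρ) = (c * (4 * Real.sqrt 2 * M)) * ρ := by ring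
  linarith
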